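/- arXiv:1006.3033 — 3 statements merged into one kernel-verified Lean document; each statement's English description precedes it below -/
import Mathlib

section
/- Chain rule for Wirtinger derivatives on a complex Hilbert space: let H be a complex Hilbert space, T : H → ℂ Fréchet differentiable over ℝ at c ∈ H, and S : ℂ → ℂ Fréchet differentiable over ℝ at T(c). Define the scalar Wirtinger derivatives of S at p by ∂S/∂z (p) := (fderiv ℝ S p (1) − i·fderiv ℝ S p (i))/2 and ∂S/∂z* (p) := (fderiv ℝ S p (1) + i·fderiv ℝ S p (i))/2. Then S ∘ T is Fréchet differentiable over ℝ at c and, with Lin D (h) := (D(h) − i·D(i•h))/2 and Anti D (h) := (D(h) + i·D(i•h))/2, for all h ∈ H: Lin (fderiv ℝ (S∘T) c) (h) = ∂S/∂z(T c)·Lin (fderiv ℝ T c) (h) + ∂S/∂z*(T c)·conj(Anti (fderiv ℝ T c) (h)), and Anti (fderiv ℝ (S∘T) c) (h) = ∂S/∂z(T c)·Anti (fderiv ℝ T c) (h) + ∂S/∂z*(T c)·conj(Lin (fderiv ℝ T c) (h)). -/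
/-- The ℂ-linear part (Fréchet Wirtinger derivative) of a continuous ℝ-linear
map `D : H → ℂ`. -/
noncomputable def linPart {H : Type*} [NormedAddCommGroup H]
    [InnerProductSpace ℂ H] (D : H →L[ℝ] ℂ) (h : H) : ℂ :=
  (D h - Complex.I * D (Complex.I • h)) / 2

/-- The conjugate-linear part (Fréchet conjugate Wirtinger derivative) of a
continuous ℝ-linear map `D : H → ℂ`. -/
noncomputable def antiPart {H : Type*} [NormedAddCommGroup H]
    [InnerProductSpace ℂ H] (D : H →L[ℝ] ℂ) (h : H) : ℂ :=
  (D h + Complex.I * D (Complex.I • h)) / 2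

/-- The scalar Wirtinger derivative `∂S/∂z` of `S : ℂ → ℂ` at `p`. -/
noncomputable def dz (S : ℂ → ℂ) (p : ℂ) : ℂ :=
  (fderiv ℝ S p 1 - Complex.I * fderiv ℝ S p Complex.I) / 2

/-- The scalar conjugate Wirtinger derivative `∂S/∂z*` of `S : ℂ → ℂ` at `p`. -/
noncomputable def dzStar (S : ℂ → ℂ) (p : ℂ) : ℂ :=
  (fderiv ℝ S p 1 + Complex.I * fderiv ℝ S p Complex.I) / 2

/-- Chain rule for Wirtinger derivatives on a complex Hilbert space. -/
theorem wirtinger_chain_rule {H : Type*} [NormedAddCommGroup H]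
    [InnerProductSpace ℂ H] [CompleteSpace H] (T : H → ℂ) (S : ℂ → ℂ) (c : H)
    (hT : DifferentiableAt ℝ T c) (hS : DifferentiableAt ℝ S (T c)) :
    DifferentiableAt ℝ (S ∘ T) c ∧
      ∀ h : H,
        linPart (fderiv ℝ (S ∘ T) c) h
          = dz S (T c) * linPart (fderiv ℝ T c) h
            + dzStar S (T c) * (starRingEnd ℂ) (antiPart (fderiv ℝ T c) h) ∧
        antiPart (fderiv ℝ (S ∘ T) c) h
          = dz S (T c) * antiPart (fderiv ℝ T c) h
            + dzStar S (T c) * (starRingEnd ℂ) (linPart (fderiv ℝ T c) h) := by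

  have hdiff : DifferentiableAt ℝ (S ∘ T) c := hS.comp c hT
  refine ⟨hdiff, fun h => ?_⟩
  have hcomp : fderiv ℝ (S ∘ T) c = (fderiv ℝ S (T c)).comp (fderiv ℝ T c) :=
    fderiv_comp c hS hT
  set D := fderiv ℝ S (T c) with hDdef
  set E := fderiv ℝ T c with hEdef
  have hD : ∀ z : ℂ, D z = (D 1 - Complex.I * D Complex.I) / 2 * z
      + (D 1 + Complex.I * D Complex.I) / 2 * (starRingEnd ℂ) z := by
    intro z
    have hz : z = z.re • (1 : ℂ) + z.im • Complex.I := by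
      simp [Complex.real_smul, Complex.mk_eq_add_mul_I]
    calc D z = z.re • D 1 + z.im • D Complex.I := by
          conv_lhs => rw [hz]
          rw [map_add, map_smul, map_smul]
      _ = _ := by
          have hc : (starRingEnd ℂ) z = (z.re : ℂ) - (z.im : ℂ) * Complex.I := by
            simp [Complex.ext_iff]
          rw [hc]
          conv_rhs => rw [hz]
          simp only [Complex.real_smul, smul_eq_mul, mul_one, Complex.add_re,
            Complex.add_im, Complex.ofReal_re, Complex.ofReal_im, Complex.mul_re,
            Complex.mul_im, Complex.I_re, Complex.I_im, mul_zero, mul_one,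
            zero_mul, sub_zero, zero_add, add_zero]
          linear_combination (z.im : ℂ) * D Complex.I * Complex.I_sq
  have hw : ∀ w w' : ℂ,
      (D w - Complex.I * D w') / 2
        = (D 1 - Complex.I * D Complex.I) / 2 * ((w - Complex.I * w') / 2)
          + (D 1 + Complex.I * D Complex.I) / 2
            * (starRingEnd ℂ) ((w + Complex.I * w') / 2) ∧
      (D w + Complex.I * D w') / 2
        = (D 1 - Complex.I * D Complex.I) / 2 * ((w + Complex.I * w') / 2)
          + (D 1 + Complex.I * D Complex.I) / 2
            * (starRingEnd ℂ) ((w - Complex.I * w') / 2) := by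
    intro w w'
    rw [hD w, hD w']
    constructor <;>
      · simp only [map_div₀, map_add, map_sub, map_mul, Complex.conj_I, map_ofNat,
          Complex.conj_conj]
        ring
  have hEh : (fderiv ℝ (S ∘ T) c) h = D (E h) := by rw [hcomp]; rfl
  have hEih : (fderiv ℝ (S ∘ T) c) (Complex.I • h) = D (E (Complex.I • h)) := by
    rw [hcomp]; rfl
  simp only [linPart, antiPart, dz, dzStar, hEh, hEih, ← hDdef, ← hEdef]
  exact hw (E h) (E (Complex.I • h))
end

section
/- The complex Gaussian function is a positive definite kernel: fix d ∈ ℕ and σ > 0, and define κ : ℂ^d × ℂ^d → ℂ by κ(z, w) := exp(−(Σ_{l=1}^{d} (z_l − conj(w_l))²)/σ²). Then (i) κ is Hermitian: conj(κ(z, w)) = κ(w, z) for all z, w ∈ ℂ^d; and (ii) for every N ∈ ℕ, every family of points z : Fin N → ℂ^d, and every family of coefficients c : Fin N → ℂ, the Gram sum Σ_{i,j} conj(c i)·(c j)·κ(z i, z j) is a nonnegative real number (its imaginary part is 0 and its real part is ≥ 0). -/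
open scoped ComplexConjugate
open Finset

-- Gram sum of the n-th power of the inner-product kernel is a sum of normSq's
lemma gram_pow (d N n : ℕ) (v : Fin N → Fin d → ℂ) (b : Fin N → ℂ) :
    ∑ i : Fin N, ∑ j : Fin N,
        (conj (b i) * b j) * (∑ l : Fin d, v i l * conj (v j l)) ^ n
      = ∑ p : Fin n → Fin d,
          (Complex.normSq (∑ i : Fin N, conj (b i) * ∏ k, v i (p k)) : ℂ) := by
  have expand : ∀ i j : Fin N, (∑ l : Fin d, v i l * conj (v j l)) ^ n
      = ∑ p : Fin n → Fin d, (∏ k, v i (p k)) * conj (∏ k, v j (p k)) := by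
    intro i j
    rw [Finset.sum_pow' Finset.univ (fun l => v i l * conj (v j l)) n]
    rw [Fintype.piFinset_univ]
    refine Finset.sum_congr rfl fun p _ => ?_
    rw [Finset.prod_mul_distrib, map_prod]
  simp_rw [expand, Finset.mul_sum]
  rw [Finset.sum_comm]
  conv_lhs => enter [2, j]; rw [Finset.sum_comm]
  rw [Finset.sum_comm]
  refine Finset.sum_congr rfl fun p _ => ?_
  rw [← Complex.mul_conj, map_sum, Finset.sum_mul_sum, Finset.sum_comm]
  refine Finset.sum_congr rfl fun i _ => Finset.sum_congr rfl fun j _ => ?_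
  simp only [map_mul, RingHomCompTriple.comp_apply, RingHom.id_apply, Complex.conj_conj]
  ring

lemma exp_gram_nonneg (d N : ℕ) (t : ℝ) (ht : 0 ≤ t) (v : Fin N → Fin d → ℂ)
    (b : Fin N → ℂ) :
    0 ≤ (∑ i : Fin N, ∑ j : Fin N,
        conj (b i) * b j *
          Complex.exp ((t : ℂ) * ∑ l : Fin d, v i l * conj (v j l))).re := by
  set A : Fin N → Fin N → ℂ := fun i j => (t : ℂ) * ∑ l : Fin d, v i l * conj (v j l) with hA
  have hexp : ∀ i j, Complex.exp (A i j) = ∑' n : ℕ, A i j ^ n / (n.factorial : ℂ) := by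
    intro i j
    rw [Complex.exp_eq_exp_ℂ, NormedSpace.exp_eq_tsum_div]
  have hsum : ∀ i j, Summable (fun n : ℕ => (conj (b i) * b j) * (A i j ^ n / (n.factorial : ℂ))) :=
    fun i j => (NormedSpace.expSeries_div_summable (A i j)).mul_left _
  set r : ℕ → ℝ := fun n => (t ^ n / (n.factorial : ℝ)) *
      ∑ p : Fin n → Fin d, Complex.normSq (∑ i : Fin N, conj (b i) * ∏ k, v i (p k)) with hr
  have hterm : ∀ n : ℕ, (∑ i : Fin N, ∑ j : Fin N, (conj (b i) * b j) * (A i j ^ n / (n.factorial : ℂ)))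
      = ((r n : ℝ) : ℂ) := by
    intro n
    have step : (∑ i : Fin N, ∑ j : Fin N, (conj (b i) * b j) * (A i j ^ n / (n.factorial : ℂ)))
        = ((t : ℂ) ^ n / (n.factorial : ℂ)) * ∑ i : Fin N, ∑ j : Fin N,
            (conj (b i) * b j) * (∑ l : Fin d, v i l * conj (v j l)) ^ n := by
      rw [Finset.mul_sum]
      refine Finset.sum_congr rfl fun i _ => ?_
      rw [Finset.mul_sum]
      refine Finset.sum_congr rfl fun j _ => ?_
      rw [hA, mul_pow]
      ring
    rw [step, gram_pow, hr]
    push_cast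
    ring
  have hSummable : Summable (fun n : ℕ => ((r n : ℝ) : ℂ)) := by
    refine Summable.congr ?_ hterm
    exact summable_sum fun i _ => summable_sum fun j _ => hsum i j
  have hS : (∑ i : Fin N, ∑ j : Fin N, conj (b i) * b j * Complex.exp (A i j))
      = ∑' n : ℕ, ((r n : ℝ) : ℂ) := by
    have h1 : (∑ i : Fin N, ∑ j : Fin N, conj (b i) * b j * Complex.exp (A i j))
        = ∑' n : ℕ, ∑ i : Fin N, ∑ j : Fin N,
            (conj (b i) * b j) * (A i j ^ n / (n.factorial : ℂ)) := by
      rw [Summable.tsum_finsetSum fun i _ => summable_sum fun j _ => hsum i j]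
      refine Finset.sum_congr rfl fun i _ => ?_
      rw [Summable.tsum_finsetSum fun j _ => hsum i j]
      refine Finset.sum_congr rfl fun j _ => ?_
      rw [hexp i j, ← tsum_mul_left]
    exact h1.trans (tsum_congr hterm)
  rw [hS, Complex.re_tsum hSummable]
  simp only [Complex.ofReal_re]
  refine tsum_nonneg fun n => ?_
  refine mul_nonneg (by positivity) ?_
  exact Finset.sum_nonneg fun p _ => Complex.normSq_nonneg _


/-- The complex Gaussian kernel on `ℂ^d` with parameter `σ`:
`κ(z, w) = exp(−(Σ_l (z_l − conj(w_l))²)/σ²)`. -/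
noncomputable def complexGaussianKernel (d : ℕ) (σ : ℝ) (z w : Fin d → ℂ) : ℂ :=
  Complex.exp (-(∑ l : Fin d, (z l - conj (w l)) ^ 2) / (σ : ℂ) ^ 2)

/-- The complex Gaussian function is a positive definite kernel: it is
Hermitian and all its Gram sums are nonnegative real numbers. -/
theorem complexGaussianKernel_positive_definite (d : ℕ) (σ : ℝ) (hσ : 0 < σ) :
    (∀ z w : Fin d → ℂ,
        conj (complexGaussianKernel d σ z w) = complexGaussianKernel d σ w z) ∧
      ∀ (N : ℕ) (z : Fin N → Fin d → ℂ) (c : Fin N → ℂ),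
        (∑ i : Fin N, ∑ j : Fin N,
            conj (c i) * c j * complexGaussianKernel d σ (z i) (z j)).im = 0 ∧
        0 ≤ (∑ i : Fin N, ∑ j : Fin N,
            conj (c i) * c j * complexGaussianKernel d σ (z i) (z j)).re := by
  have hσ2 : ((σ : ℂ)) ^ 2 ≠ 0 :=
    pow_ne_zero _ (Complex.ofReal_ne_zero.mpr hσ.ne')
  have herm : ∀ z w : Fin d → ℂ,
      conj (complexGaussianKernel d σ z w) = complexGaussianKernel d σ w z := by
    intro z w
    unfold complexGaussianKernel
    rw [← Complex.exp_conj]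
    congr 1
    simp only [map_div₀, map_neg, map_sum, map_pow, map_sub, Complex.conj_conj,
      Complex.conj_ofReal]
    congr 2
    exact Finset.sum_congr rfl fun l _ => by ring
  refine ⟨herm, fun N z c => ?_⟩
  set S : ℂ := ∑ i : Fin N, ∑ j : Fin N,
      conj (c i) * c j * complexGaussianKernel d σ (z i) (z j) with hSdef
  have hconjS : conj S = S := by
    rw [hSdef, map_sum]
    rw [Finset.sum_comm]
    refine Finset.sum_congr rfl fun i _ => ?_
    rw [map_sum]
    refine Finset.sum_congr rfl fun j _ => ?_
    simp only [map_mul, Complex.conj_conj]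
    rw [herm]
    ring
  constructor
  · exact (Complex.conj_eq_iff_im.mp hconjS)
  · -- factorization
    set E : (Fin d → ℂ) → ℂ :=
      fun w => Complex.exp (-(∑ l : Fin d, w l ^ 2) / (σ : ℂ) ^ 2) with hE
    have hfact : ∀ zz ww : Fin d → ℂ,
        complexGaussianKernel d σ zz ww
          = E zz * conj (E ww) *
            Complex.exp (((2 / σ ^ 2 : ℝ) : ℂ) * ∑ l : Fin d, zz l * conj (ww l)) := by
      intro zz ww
      unfold complexGaussianKernel
      rw [hE, ← Complex.exp_conj, ← Complex.exp_add, ← Complex.exp_add]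
      congr 1
      simp only [map_div₀, map_neg, map_sum, map_pow, Complex.conj_ofReal]
      have hexpand : ∑ l : Fin d, (zz l - conj (ww l)) ^ 2
          = (∑ l : Fin d, zz l ^ 2) - 2 * (∑ l : Fin d, zz l * conj (ww l))
              + ∑ l : Fin d, (conj (ww l)) ^ 2 := by
        rw [Finset.mul_sum, ← Finset.sum_sub_distrib, ← Finset.sum_add_distrib]
        exact Finset.sum_congr rfl fun l _ => by ring
      rw [hexpand]
      push_cast
      field_simp
      ring
    set b : Fin N → ℂ := fun i => c i * conj (E (z i)) with hb
    have hterm : S = ∑ i : Fin N, ∑ j : Fin N,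
        conj (b i) * b j *
          Complex.exp (((2 / σ ^ 2 : ℝ) : ℂ) * ∑ l : Fin d, z i l * conj (z j l)) := by
      rw [hSdef]
      refine Finset.sum_congr rfl fun i _ => Finset.sum_congr rfl fun j _ => ?_
      rw [hfact, hb]
      simp only [map_mul, Complex.conj_conj]
      ring
    rw [hterm]
    exact exp_gram_nonneg d N (2 / σ ^ 2) (by positivity) z b
end

section
/- Closed form of the complexified-kernel LMS (CKLMS1) output: let 𝓗 be a real inner product space, and on 𝓗 × 𝓗 define B((f₁,f₂),(g₁,g₂)) := (⟨f₁,g₁⟩ + ⟨f₂,g₂⟩) + i·(⟨f₂,g₁⟩ − ⟨f₁,g₂⟩) and the complex action (a + b·i) • (f₁,f₂) := (a f₁ − b f₂, b f₁ + a f₂). Let μ ∈ ℝ, ψ : ℕ → 𝓗, d : ℕ → ℂ, and set φ n := (ψ n, ψ n) ∈ 𝓗 × 𝓗. Define recursively w 0 := 0 and, for n ≥ 1, e n := d n − B(φ n, w (n−1)) and w n := w (n−1) + ((μ : ℂ) · conj (e n)) • (φ n). Then for every n ≥ 1 the filter output satisfies B(φ n, w (n−1)) = 2μ · Σ_{k=1}^{n−1}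 (Re (e k)) · ⟨ψ n, ψ k⟩ + 2μ · i · Σ_{k=1}^{n−1} (Im (e k)) · ⟨ψ n, ψ k⟩, i.e., B(φ n, w (n−1)) = 2μ · Σ_{k=1}^{n−1} (e k) · (⟨ψ n, ψ k⟩ : ℂ). -/
open scoped RealInnerProductSpace ComplexConjugate

/-- The complexified inner product on `𝓗 × 𝓗` for a real inner product space
`𝓗`: `B((f₁,f₂),(g₁,g₂)) = (⟨f₁,g₁⟩ + ⟨f₂,g₂⟩) + i(⟨f₂,g₁⟩ − ⟨f₁,g₂⟩)`. -/
noncomputable def complexifiedInner {𝓗 : Type*} [NormedAddCommGroup 𝓗]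
    [InnerProductSpace ℝ 𝓗] (x y : 𝓗 × 𝓗) : ℂ :=
  ((⟪x.1, y.1⟫ + ⟪x.2, y.2⟫ : ℝ) : ℂ) +
    Complex.I * ((⟪x.2, y.1⟫ - ⟪x.1, y.2⟫ : ℝ) : ℂ)

/-- The complex scalar action on the complexification `𝓗 × 𝓗`:
`(a + b·i) • (f₁, f₂) = (a f₁ − b f₂, b f₁ + a f₂)`. -/
noncomputable def complexifiedSMul {𝓗 : Type*} [NormedAddCommGroup 𝓗]
    [InnerProductSpace ℝ 𝓗] (c : ℂ) (x : 𝓗 × 𝓗) : 𝓗 × 𝓗 :=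
  (c.re • x.1 - c.im • x.2, c.im • x.1 + c.re • x.2)

lemma complexifiedInner_zero {𝓗 : Type*} [NormedAddCommGroup 𝓗]
    [InnerProductSpace ℝ 𝓗] (x : 𝓗 × 𝓗) : complexifiedInner x (0 : 𝓗 × 𝓗) = 0 := by
  simp [complexifiedInner]

lemma complexifiedInner_add {𝓗 : Type*} [NormedAddCommGroup 𝓗]
    [InnerProductSpace ℝ 𝓗] (x y z : 𝓗 × 𝓗) :
    complexifiedInner x (y + z) = complexifiedInner x y + complexifiedInner x z := by
  simp only [complexifiedInner, Prod.fst_add, Prod.snd_add, inner_add_right]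
  push_cast
  ring

lemma complexifiedInner_smul_diag {𝓗 : Type*} [NormedAddCommGroup 𝓗]
    [InnerProductSpace ℝ 𝓗] (a b : 𝓗) (c : ℂ) :
    complexifiedInner (a, a) (complexifiedSMul c (b, b))
      = 2 * (starRingEnd ℂ) c * ((⟪a, b⟫ : ℝ) : ℂ) := by
  simp only [complexifiedInner, complexifiedSMul, inner_sub_right, inner_add_right,
    inner_smul_right, Complex.ext_iff]
  constructor <;> simp <;> ring

/-- Closed form of the complexified-kernel LMS (CKLMS1) output: with
`φ n = (ψ n, ψ n)`, `w 0 = 0`, `e n = d n − B(φ n, w(n−1))` and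
`w n = w(n−1) + (μ·conj(e n)) • φ n`, the filter output satisfies
`B(φ n, w(n−1)) = 2μ Σ Re(e k)⟨ψ n, ψ k⟩ + 2μi Σ Im(e k)⟨ψ n, ψ k⟩
               = 2μ Σ e k ⟨ψ n, ψ k⟩`. -/
theorem cklms1_closed_form {𝓗 : Type*} [NormedAddCommGroup 𝓗]
    [InnerProductSpace ℝ 𝓗] (μ : ℝ) (ψ : ℕ → 𝓗) (d : ℕ → ℂ)
    (w : ℕ → 𝓗 × 𝓗) (e : ℕ → ℂ)
    (hw0 : w 0 = 0)
    (he : ∀ n : ℕ, 1 ≤ n → e n = d n - complexifiedInner (ψ n, ψ n) (w (n - 1)))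
    (hw : ∀ n : ℕ, 1 ≤ n →
      w n = w (n - 1) + complexifiedSMul ((μ : ℂ) * conj (e n)) (ψ n, ψ n)) :
    ∀ n : ℕ, 1 ≤ n →
      complexifiedInner (ψ n, ψ n) (w (n - 1))
        = ((2 * μ * ∑ k ∈ Finset.Icc 1 (n - 1), (e k).re * ⟪ψ n, ψ k⟫ : ℝ) : ℂ)
          + ((2 * μ : ℝ) : ℂ) * Complex.I
            * ((∑ k ∈ Finset.Icc 1 (n - 1), (e k).im * ⟪ψ n, ψ k⟫ : ℝ) : ℂ) ∧
      complexifiedInner (ψ n, ψ n) (w (n - 1))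
        = ((2 * μ : ℝ) : ℂ)
          * ∑ k ∈ Finset.Icc 1 (n - 1), e k * ((⟪ψ n, ψ k⟫ : ℝ) : ℂ) := by
  have hwsum : ∀ m : ℕ, w m = ∑ k ∈ Finset.Icc 1 m,
      complexifiedSMul ((μ : ℂ) * conj (e k)) (ψ k, ψ k) := by
    intro m
    induction m with
    | zero => simp [hw0]
    | succ m ih =>
      rw [hw (m + 1) (Nat.le_add_left 1 m)]
      simp only [Nat.add_sub_cancel, ih]
      rw [Finset.sum_Icc_succ_top (Nat.le_add_left 1 m)]
  intro n hn
  have key : complexifiedInner (ψ n, ψ n) (w (n - 1))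
      = ((2 * μ : ℝ) : ℂ) * ∑ k ∈ Finset.Icc 1 (n - 1), e k * ((⟪ψ n, ψ k⟫ : ℝ) : ℂ) := by
    rw [hwsum (n - 1)]
    have hlin : ∀ (s : Finset ℕ), complexifiedInner (ψ n, ψ n)
        (∑ k ∈ s, complexifiedSMul ((μ : ℂ) * conj (e k)) (ψ k, ψ k))
        = ∑ k ∈ s, complexifiedInner (ψ n, ψ n)
            (complexifiedSMul ((μ : ℂ) * conj (e k)) (ψ k, ψ k)) := by
      intro s
      induction s using Finset.induction with
      | empty => simp [complexifiedInner_zero]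
      | insert a s h ih =>
        rw [Finset.sum_insert h, Finset.sum_insert h, complexifiedInner_add, ih]
    rw [hlin, Finset.mul_sum]
    refine Finset.sum_congr rfl fun k _ => ?_
    rw [complexifiedInner_smul_diag]
    simp only [map_mul, Complex.conj_conj, Complex.conj_ofReal]
    push_cast
    ring
  refine ⟨?_, key⟩
  rw [key]
  push_cast [Finset.mul_sum]
  rw [← Finset.sum_add_distrib]
  refine Finset.sum_congr rfl fun k _ => ?_
  rw [← Complex.re_add_im (e k)]
  push_cast
  simp only [Complex.add_re, Complex.add_im, Complex.ofReal_re, Complex.ofReal_im,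
    Complex.mul_re, Complex.mul_im, Complex.I_re, Complex.I_im]
  push_cast
  ring
end
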